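/- arXiv:2108.05161 — 2 statements merged into one kernel-verified Lean document; each statement's English description precedes it below -/
import Mathlib

section
/- If F : ℂⁿ → ℂ (n ≥ 1) is holomorphic on all of ℂⁿ and its range omits at least two distinct complex values, then F is constant. -/
open Complex Metric Set
open scoped Nat

/-- Every entire function has a primitive. -/
lemma entire_exists_primitive {f : ℂ → ℂ} (hf : Differentiable ℂ f) :
    ∃ g : ℂ → ℂ, ∀ z, HasDerivAt g (f z) z := by
  set a : ℕ → ℂ := fun n => (n ! : ℂ)⁻¹ * iteratedDeriv n f 0 with ha
  have hsum : ∀ z : ℂ, HasSum (fun n : ℕ => a n * z ^ n) (f z) := by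
    intro z
    have := Complex.hasSum_taylorSeries_of_entire hf 0 z
    simpa [ha, smul_eq_mul, sub_zero, mul_comm, mul_assoc, mul_left_comm] using this
  refine ⟨fun z => ∑' n : ℕ, (a n / (n + 1)) * z ^ (n + 1), fun y => ?_⟩
  set R : ℝ := ‖y‖ + 1 with hR
  have hRpos : (0:ℝ) < R := by positivity
  have hterm : ∀ (n : ℕ) (z : ℂ), HasDerivAt (fun w => (a n / (n + 1)) * w ^ (n + 1))
      (a n * z ^ n) z := by
    intro n z
    have h1 : HasDerivAt (fun w : ℂ => w ^ (n + 1)) ((n + 1 : ℕ) * z ^ n) z :=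
      hasDerivAt_pow (n + 1) z
    have := h1.const_mul (a n / (n + 1))
    refine this.congr_deriv ?_
    have hne : ((n : ℂ) + 1) ≠ 0 := Nat.cast_add_one_ne_zero n
    push_cast
    field_simp
  have hu : Summable (fun n : ℕ => ‖a n‖ * R ^ n) := by
    have : Summable (fun n : ℕ => a n * (R : ℂ) ^ n) := (hsum R).summable
    have := (summable_norm_iff.mpr this)
    simpa [norm_mul, norm_pow, Complex.norm_real, abs_of_pos hRpos,
      Real.norm_eq_abs] using this
  have key := hasDerivAt_tsum_of_isPreconnected (g := fun n z => (a n / (n + 1)) * z ^ (n + 1))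
      (g' := fun n z => a n * z ^ n) (y := y) hu isOpen_ball (convex_ball (0:ℂ) R).isPreconnected
      (fun n z _ => hterm n z) ?_ (mem_ball_self hRpos) ?_ ?_
  · have : ∑' n : ℕ, a n * y ^ n = f y := (hsum y).tsum_eq
    rw [this] at key
    exact key
  · intro n z hz
    have hzR : ‖z‖ ≤ R := by
      have := mem_ball_iff_norm.mp hz
      simpa using this.le
    calc ‖a n * z ^ n‖ = ‖a n‖ * ‖z‖ ^ n := by simp [norm_mul, norm_pow]
      _ ≤ ‖a n‖ * R ^ n := by gcongr
  · refine Summable.congr summable_zero fun n => ?_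
    simp
  · simp [mem_ball, hR]

/-- Differentiability of the derivative of an entire function. -/
lemma entire_deriv {f : ℂ → ℂ} (hf : Differentiable ℂ f) : Differentiable ℂ (deriv f) := by
  have h1 : AnalyticOnNhd ℂ f Set.univ := fun z _ => hf.analyticAt z
  have := h1.deriv
  intro z
  exact (this z (Set.mem_univ z)).differentiableAt

/-- An entire function with no zeros has an entire logarithm. -/
lemma entire_exists_log {f : ℂ → ℂ} (hf : Differentiable ℂ f) (h0 : ∀ z, f z ≠ 0) :
    ∃ g : ℂ → ℂ, Differentiable ℂ g ∧ ∀ z, Complex.exp (g z) = f z := by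
  have hq : Differentiable ℂ (fun z => deriv f z / f z) := (entire_deriv hf).div hf h0
  obtain ⟨g₁, hg₁⟩ := entire_exists_primitive hq
  have hg₁d : Differentiable ℂ g₁ := fun z => (hg₁ z).differentiableAt
  set P : ℂ → ℂ := fun z => f z * Complex.exp (-g₁ z) with hP
  have hPd : ∀ z, HasDerivAt P 0 z := by
    intro z
    have h2 : HasDerivAt (fun w => Complex.exp (-g₁ w)) (Complex.exp (-g₁ z) * (-(deriv f z / f z))) z := by
      have := ((hg₁ z).neg).cexp
      simpa [mul_comm] using this
    have h3 := ((hf z).hasDerivAt.mul h2)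
    refine h3.congr_deriv ?_
    field_simp [h0 z]
    ring
  have hconst : ∀ z, P z = P 0 := by
    intro z
    exact is_const_of_deriv_eq_zero (fun w => (hPd w).differentiableAt)
      (fun w => (hPd w).deriv) z 0
  have hc0 : P 0 ≠ 0 := mul_ne_zero (h0 0) (Complex.exp_ne_zero _)
  refine ⟨fun z => g₁ z + Complex.log (P 0), hg₁d.add_const _, fun z => ?_⟩
  have := hconst z
  rw [Complex.exp_add, Complex.exp_log hc0]
  rw [hP] at this
  simp only at this
  have : cexp (g₁ z) * (f 0 * cexp (-g₁ 0)) = cexp (g₁ z) * (f z * cexp (-g₁ z)) := by rw [this]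
  calc cexp (g₁ z) * P 0 = cexp (g₁ z) * (f 0 * cexp (-g₁ 0)) := rfl
    _ = cexp (g₁ z) * (f z * cexp (-g₁ z)) := this
    _ = f z * (cexp (g₁ z) * cexp (-g₁ z)) := by ring
    _ = f z := by rw [← Complex.exp_add]; simp

/-- Disk capture: if `h` is entire and `‖h z - h a‖ ≥ m` on a sphere around `a`,
then the range of `h` contains the ball of radius `m/2` around `h a`. -/
lemma capture {h : ℂ → ℂ} (hh : Differentiable ℂ h) {a : ℂ} {ρ m : ℝ} (hρ : 0 < ρ)
    (hm : 0 < m) (hbd : ∀ z ∈ sphere a ρ, m ≤ dist (h z) (h a)) :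
    ball (h a) (m / 2) ⊆ Set.range h := by
  intro w hw
  by_contra hw'
  have hne : ∀ z, h z - w ≠ 0 := by
    intro z hz
    exact hw' ⟨z, sub_eq_zero.mp hz⟩
  have hG : Differentiable ℂ (fun z => (h z - w)⁻¹) :=
    (hh.sub_const w).inv hne
  have hfr : ∀ z ∈ frontier (ball a ρ), ‖(h z - w)⁻¹‖ ≤ (m / 2)⁻¹ := by
    intro z hz
    rw [frontier_ball a hρ.ne'] at hz
    have h1 : m ≤ dist (h z) (h a) := hbd z hz
    have h2 : dist w (h a) < m / 2 := mem_ball.mp hw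
    have h3 : m / 2 ≤ ‖h z - w‖ := by
      have h5 := dist_triangle (h z) w (h a)
      simp only [dist_eq_norm] at h5 h1 h2
      linarith
    rw [norm_inv]
    exact inv_anti₀ (by linarith) h3
  have := Complex.norm_le_of_forall_mem_frontier_norm_le isBounded_ball
    hG.diffContOnCl hfr (z := a)
    (subset_closure (mem_ball_self hρ))
  rw [norm_inv] at this
  have h2 : dist w (h a) < m / 2 := mem_ball.mp hw
  have h8 : ‖h a - w‖ < m / 2 := by
    rw [← dist_eq_norm, dist_comm]
    exact h2
  have h9 : 0 < ‖h a - w‖ := norm_pos_iff.mpr (hne a)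
  have h10 : (m / 2)⁻¹ < ‖h a - w‖⁻¹ := by
    apply inv_strictAnti₀ h9 h8
  linarith

/-- Bloch–Landau type lemma: the range of an entire function with a non-vanishing
derivative somewhere contains balls of arbitrarily large radius. -/
lemma bigDisks {h : ℂ → ℂ} (hh : Differentiable ℂ h) {y : ℂ} (hy : deriv h y ≠ 0)
    (d : ℝ) : ∃ p : ℂ, ball p d ⊆ Set.range h := by
  have hd' : Differentiable ℂ (deriv h) := entire_deriv hh
  set B₀ : ℝ := ‖deriv h y‖ with hB₀
  have hB₀pos : 0 < B₀ := norm_pos_iff.mpr hy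
  set R : ℝ := 256 * (|d| + 1) / (3 * B₀) with hRdef
  have hRpos : 0 < R := by positivity
  -- maximize (R - dist z y) * ‖deriv h z‖ on the closed ball
  set Φ : ℂ → ℝ := fun z => (R - dist z y) * ‖deriv h z‖ with hΦdef
  have hΦcont : ContinuousOn Φ (closedBall y R) := by
    apply ContinuousOn.mul
    · exact (continuous_const.sub (continuous_id.dist continuous_const)).continuousOn
    · exact (hd'.continuous.norm).continuousOn
  obtain ⟨a, haK, hmax⟩ := (isCompact_closedBall y R).exists_isMaxOn
    ⟨y, mem_closedBall_self hRpos.le⟩ hΦcont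
  have hmax' : ∀ z ∈ closedBall y R, Φ z ≤ Φ a := fun z hz => hmax hz
  have hΦy : Φ y = R * B₀ := by simp [hΦdef, hB₀]
  have hΦa_pos : 0 < Φ a := by
    have := hmax' y (mem_closedBall_self hRpos.le)
    rw [hΦy] at this
    nlinarith
  set B : ℝ := ‖deriv h a‖ with hB
  have hBpos : 0 < B := by
    rcases (mul_pos_iff.mp hΦa_pos) with ⟨_, hb⟩ | ⟨_, hb⟩
    · exact hb
    · exact absurd hb (not_lt.mpr (norm_nonneg _))
  have hda : dist a y < R := by
    have h' : 0 < (R - dist a y) * ‖deriv h a‖ := hΦa_pos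
    rcases mul_pos_iff.mp h' with ⟨h1, _⟩ | ⟨_, h2⟩
    · linarith
    · exact absurd h2 (not_lt.mpr (norm_nonneg _))
  set r : ℝ := (R - dist a y) / 2 with hrdef
  have hrpos : 0 < r := by simp [hrdef]; linarith
  have hΦa : Φ a = 2 * r * B := by rw [hΦdef, hB, hrdef]; ring
  -- bound on the derivative on ball a r
  have hbound : ∀ z ∈ ball a r, ‖deriv h z‖ ≤ 2 * B := by
    intro z hz
    have h1 : dist z a < r := mem_ball.mp hz
    have h2 : dist z y ≤ R - r := by
      have := dist_triangle z a y
      have : dist z y ≤ dist z a + dist a y := this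
      have hR2 : dist a y = R - 2 * r := by rw [hrdef]; ring
      linarith
    have h3 : z ∈ closedBall y R := mem_closedBall.mpr (by linarith)
    have h4 := hmax' z h3
    rw [hΦa] at h4
    have h5 : r ≤ R - dist z y := by linarith
    have h6 : r * ‖deriv h z‖ ≤ (R - dist z y) * ‖deriv h z‖ := by
      apply mul_le_mul_of_nonneg_right h5 (norm_nonneg _)
    have : r * ‖deriv h z‖ ≤ 2 * r * B := le_trans h6 h4
    have := (mul_le_mul_iff_right₀ hrpos).mp (by linarith : r * ‖deriv h z‖ ≤ r * (2 * B))
    linarith [this]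
  -- Schwarz: modulus of continuity of deriv h near a
  have hmaps : Set.MapsTo (deriv h) (ball a r) (ball (deriv h a) (4 * B)) := by
    intro z hz
    rw [mem_ball]
    have h1 : dist (deriv h z) (deriv h a) ≤ ‖deriv h z‖ + ‖deriv h a‖ := by
      rw [dist_eq_norm]
      exact (norm_sub_le _ _)
    have := hbound z hz
    rw [← hB] at *
    nlinarith
  have hschwarz : ∀ z ∈ ball a r, dist (deriv h z) (deriv h a) ≤ 4 * B / r * dist z a :=
    fun z hz => Complex.dist_le_div_mul_dist_of_mapsTo_ball
      (hd'.differentiableOn) (hmaps.mono_right ball_subset_closedBall) hz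
  -- mean value estimate on the closed ball of radius ρ
  set ρ : ℝ := r / 16 with hρdef
  have hρpos : 0 < ρ := by positivity
  have hρr : ρ < r := by rw [hρdef]; linarith
  have hmvt : ∀ z ∈ closedBall a ρ,
      ‖(h z - deriv h a * z) - (h a - deriv h a * a)‖ ≤ B / 4 * ‖z - a‖ := by
    intro z hz
    have hsub : closedBall a ρ ⊆ ball a r := closedBall_subset_ball hρr
    refine (convex_closedBall a ρ).norm_image_sub_le_of_norm_hasFDerivWithin_le
      (f := fun w => h w - deriv h a * w)
      (f' := fun w => ContinuousLinearMap.smulRight (1 : ℂ →L[ℂ] ℂ) (deriv h w - deriv h a))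
      (fun w hw => ?_) (fun w hw => ?_)
      (mem_closedBall_self hρpos.le) hz
    · have h1 : HasDerivAt (fun w => h w - deriv h a * w) (deriv h w - deriv h a) w := by
        have := ((hh w).hasDerivAt).sub ((hasDerivAt_id w).const_mul (deriv h a))
        exact this.congr_deriv (by simp)
      exact h1.hasFDerivAt.hasFDerivWithinAt
    · rw [ContinuousLinearMap.norm_smulRight_apply]
      simp only [norm_one, one_mul]
      have h2 := hschwarz w (hsub hw)
      rw [dist_eq_norm] at h2
      have h3 : dist w a ≤ ρ := mem_closedBall.mp hw
      have h4 : 4 * B / r * dist w a ≤ 4 * B / r * ρ := by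
        apply mul_le_mul_of_nonneg_left h3 (by positivity)
      have h5 : 4 * B / r * ρ = B / 4 := by rw [hρdef]; field_simp; ring
      linarith
  -- lower bound on the sphere of radius ρ
  have hsphere : ∀ z ∈ sphere a ρ, 3 / 4 * B * ρ ≤ dist (h z) (h a) := by
    intro z hz
    have hzρ : ‖z - a‖ = ρ := by
      have := mem_sphere_iff_norm.mp hz
      exact this
    have h1 := hmvt z (sphere_subset_closedBall hz)
    rw [hzρ] at h1
    have h2 : ‖deriv h a * (z - a)‖ = B * ρ := by
      rw [norm_mul, hzρ, ← hB]
    have h3 : ‖h z - h a‖ ≥ ‖deriv h a * (z - a)‖ - ‖(h z - deriv h a * z) - (h a - deriv h a * a)‖ := by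
      have : h z - h a = ((h z - deriv h a * z) - (h a - deriv h a * a)) + deriv h a * (z - a) := by
        ring
      rw [this]
      have := norm_add_le ((h z - deriv h a * z) - (h a - deriv h a * a)) (deriv h a * (z - a))
      have h7 := norm_sub_norm_le (((h z - deriv h a * z) - (h a - deriv h a * a)) + deriv h a * (z - a)) (((h z - deriv h a * z) - (h a - deriv h a * a)))
      calc ‖((h z - deriv h a * z) - (h a - deriv h a * a)) + deriv h a * (z - a)‖
          ≥ ‖deriv h a * (z - a)‖ - ‖((h z - deriv h a * z) - (h a - deriv h a * a))‖ := by
            have h8 := norm_add_le (-(((h z - deriv h a * z) - (h a - deriv h a * a)))) ((((h z - deriv h a * z) - (h a - deriv h a * a))) + deriv h a * (z - a))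
            simp only [neg_add_cancel_left, norm_neg] at h8
            linarith
        _ = ‖deriv h a * (z - a)‖ - ‖((h z - deriv h a * z) - (h a - deriv h a * a))‖ := rfl
    rw [dist_eq_norm]
    rw [h2] at h3
    linarith
  -- capture a ball of radius (3/8) B ρ around h a
  have hcap := capture hh hρpos (by positivity : (0:ℝ) < 3 / 4 * B * ρ) hsphere
  refine ⟨h a, subset_trans (ball_subset_ball ?_) hcap⟩
  -- d ≤ (3/4 * B * ρ) / 2
  have key : 3 / 4 * B * ρ / 2 = 3 / 256 * (B * (R - dist a y)) := by
    rw [hρdef, hrdef]; ring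
  have h1 : R * B₀ ≤ Φ a := by rw [← hΦy]; exact hmax' y (mem_closedBall_self hRpos.le)
  have h2 : Φ a = B * (R - dist a y) := by rw [hΦdef, hB]; ring
  have h3 : R * B₀ = 256 * (|d| + 1) / 3 := by
    rw [hRdef]; field_simp
  have : |d| + 1 ≤ 3 / 4 * B * ρ / 2 := by
    rw [key, ← h2]
    nlinarith [h1, h3]
  have hd4 : d ≤ |d| + 1 := by
    have := le_abs_self d; linarith
  linarith

/-- The grid of omitted values in the classical proof of Picard's little theorem. -/
def InGrid (q : ℂ) : Prop :=
  ∃ (n : ℕ) (m : ℤ) (ε : ℤ), 1 ≤ n ∧ (ε = 1 ∨ ε = -1) ∧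
    q = (ε : ℂ) * (Real.log (Real.sqrt n + Real.sqrt ((n : ℝ) - 1)) : ℝ) +
      (m : ℂ) * (Real.pi : ℝ) * Complex.I

/-- The grid is 4-dense in the plane. -/
lemma grid_dense (p : ℂ) : ∃ q : ℂ, InGrid q ∧ dist p q < 4 := by
  set x : ℝ := |p.re| with hx
  have hx0 : 0 ≤ x := abs_nonneg _
  set n : ℕ := ⌈Real.exp (2 * x)⌉₊ with hn
  have hexp1 : (1:ℝ) ≤ Real.exp (2 * x) := by
    rw [show (1:ℝ) = Real.exp 0 by simp]
    exact Real.exp_le_exp.mpr (by linarith)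
  have hn1 : 1 ≤ n := by
    rw [hn]
    exact_mod_cast Nat.one_le_ceil_iff.mpr (by linarith)
  have hle : Real.exp (2 * x) ≤ (n : ℝ) := Nat.le_ceil _
  have hup : (n : ℝ) ≤ 2 * Real.exp (2 * x) := by
    have := Nat.ceil_lt_add_one (by positivity : (0:ℝ) ≤ Real.exp (2 * x))
    rw [← hn] at this
    linarith
  have hnpos : (0:ℝ) < n := by linarith
  set α : ℝ := Real.sqrt n + Real.sqrt ((n:ℝ) - 1) with hα
  have hsq : Real.sqrt (n:ℝ) ≤ α := by
    rw [hα]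
    have : (0:ℝ) ≤ Real.sqrt ((n:ℝ) - 1) := Real.sqrt_nonneg _
    linarith
  have hsq2 : α ≤ 2 * Real.sqrt (n:ℝ) := by
    rw [hα]
    have h1 : Real.sqrt ((n:ℝ) - 1) ≤ Real.sqrt (n:ℝ) :=
      Real.sqrt_le_sqrt (by linarith)
    linarith
  have hsqpos : (0:ℝ) < Real.sqrt (n:ℝ) := Real.sqrt_pos.mpr hnpos
  set c : ℝ := Real.log α with hc
  have hlog_n_lb : 2 * x ≤ Real.log (n:ℝ) := by
    have := Real.log_le_log (Real.exp_pos _) hle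
    rwa [Real.log_exp] at this
  have hlog_n_ub : Real.log (n:ℝ) ≤ Real.log 2 + 2 * x := by
    have := Real.log_le_log hnpos hup
    rwa [Real.log_mul (by norm_num) (by positivity), Real.log_exp] at this
  have hcx : x ≤ c := by
    have h1 : Real.log (Real.sqrt (n:ℝ)) ≤ c := Real.log_le_log hsqpos hsq
    rw [Real.log_sqrt hnpos.le] at h1
    linarith
  have hcu : c ≤ x + 3 / 2 * Real.log 2 := by
    have h1 : c ≤ Real.log (2 * Real.sqrt (n:ℝ)) :=
      Real.log_le_log (by positivity) hsq2
    rw [Real.log_mul (by norm_num) hsqpos.ne', Real.log_sqrt hnpos.le] at h1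
    linarith
  have hlog2 : Real.log 2 < 0.6931471808 := Real.log_two_lt_d9
  set m : ℤ := round (p.im / Real.pi) with hm
  have hpi : (0:ℝ) < Real.pi := Real.pi_pos
  have him : |p.im - m * Real.pi| ≤ Real.pi / 2 := by
    have h1 : |p.im / Real.pi - m| ≤ 1 / 2 := by
      rw [hm]; exact abs_sub_round _
    have h2 : |p.im - m * Real.pi| = |p.im / Real.pi - m| * Real.pi := by
      have h3 : p.im - m * Real.pi = (p.im / Real.pi - m) * Real.pi := by
        rw [sub_mul, div_mul_cancel₀ _ hpi.ne']
      rw [h3, abs_mul, _root_.abs_of_pos hpi]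
    rw [h2]
    calc |p.im / Real.pi - m| * Real.pi ≤ 1 / 2 * Real.pi := by
          apply mul_le_mul_of_nonneg_right h1 hpi.le
      _ = Real.pi / 2 := by ring
  set ε : ℤ := if 0 ≤ p.re then 1 else -1 with hε
  refine ⟨(ε : ℂ) * (c : ℝ) + (m : ℂ) * (Real.pi : ℝ) * Complex.I,
    ⟨n, m, ε, hn1, by rw [hε]; split <;> simp, by rw [hc, hα]⟩, ?_⟩
  set q : ℂ := (ε : ℂ) * (c : ℝ) + (m : ℂ) * (Real.pi : ℝ) * Complex.I with hq
  have hqre : q.re = (ε : ℝ) * c := by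
    rw [hq]; simp
  have hqim : q.im = (m : ℝ) * Real.pi := by
    rw [hq]; simp
  have hre : |(p - q).re| ≤ 3 / 2 * Real.log 2 := by
    rw [Complex.sub_re, hqre]
    rw [hε]
    split
    · next hp0 =>
      push_cast
      rw [_root_.abs_of_nonpos (by rw [hx, _root_.abs_of_nonneg hp0] at hcx hcu; linarith)]
      rw [hx, _root_.abs_of_nonneg hp0] at hcx hcu
      linarith
    · next hp0 =>
      push_cast
      push_neg at hp0
      rw [hx, _root_.abs_of_neg hp0] at hcx hcu
      rw [_root_.abs_of_nonneg (by linarith)]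
      linarith
  have him' : |(p - q).im| ≤ Real.pi / 2 := by
    rw [Complex.sub_im, hqim]
    exact him
  have habs := Complex.norm_le_abs_re_add_abs_im (p - q)
  have hpil : Real.pi < 3.15 := Real.pi_lt_d2
  rw [Complex.dist_eq]
  have hl2 : Real.log 2 < 0.7 := by linarith
  calc ‖p - q‖ ≤ |(p - q).re| + |(p - q).im| := habs
    _ ≤ 3 / 2 * Real.log 2 + Real.pi / 2 := by linarith
    _ < 4 := by nlinarith

/-- If `vz` is the exponential of a grid point, then `((vz + vz⁻¹)/2)^2` is a positive integer. -/
lemma grid_val {n : ℕ} (hn : 1 ≤ n) {m ε : ℤ} (hε : ε = 1 ∨ ε = -1) {vz : ℂ}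
    (hv : vz = Complex.exp ((ε : ℂ) * (Real.log (Real.sqrt n + Real.sqrt ((n : ℝ) - 1)) : ℝ) +
      (m : ℂ) * (Real.pi : ℝ) * Complex.I)) :
    ((vz + vz⁻¹) / 2) ^ 2 = (n : ℂ) := by
  set α : ℝ := Real.sqrt n + Real.sqrt ((n:ℝ) - 1) with hα
  have hn1 : (1:ℝ) ≤ (n:ℝ) := by exact_mod_cast hn
  have hsqn : Real.sqrt (n:ℝ) * Real.sqrt (n:ℝ) = (n:ℝ) :=
    Real.mul_self_sqrt (by linarith)
  have hsqn1 : Real.sqrt ((n:ℝ) - 1) * Real.sqrt ((n:ℝ) - 1) = (n:ℝ) - 1 :=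
    Real.mul_self_sqrt (by linarith)
  have h1n : (1:ℝ) ≤ Real.sqrt (n:ℝ) := by
    nlinarith [Real.sqrt_nonneg (n:ℝ)]
  have hαpos : (0:ℝ) < α := by
    rw [hα]
    have := Real.sqrt_nonneg ((n:ℝ) - 1)
    linarith
  have hiden : α + α⁻¹ = 2 * Real.sqrt (n:ℝ) := by
    have hkey : α * (2 * Real.sqrt (n:ℝ) - α) = 1 := by
      rw [hα]
      nlinarith [hsqn, hsqn1]
    field_simp
    nlinarith [hkey]
  set c : ℝ := Real.log α with hc
  have hexpc : Complex.exp (c : ℂ) = (α : ℂ) := by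
    rw [← Complex.ofReal_exp, Real.exp_log hαpos]
  set β : ℂ := Complex.exp ((ε : ℂ) * (c : ℝ)) with hβ
  have hβsum : β + β⁻¹ = ((2 * Real.sqrt (n:ℝ) : ℝ) : ℂ) := by
    have hβcases : β = ((α : ℝ) : ℂ) ∨ β = ((α⁻¹ : ℝ) : ℂ) := by
      rcases hε with h | h
      · left
        rw [hβ, h]
        push_cast
        rw [one_mul, hexpc]
      · right
        rw [hβ, h]
        push_cast
        rw [neg_one_mul, Complex.exp_neg, hexpc, ← Complex.ofReal_inv]
    rcases hβcases with h | h <;> rw [h]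
    · norm_cast
    · push_cast
      rw [inv_inv]
      rw [← Complex.ofReal_inv, ← Complex.ofReal_add, add_comm, hiden]
      simp
  set μ : ℂ := (-1 : ℂ) ^ m with hμ
  have hμsq : μ ^ 2 = 1 := by
    rw [hμ, ← zpow_natCast (((-1:ℂ) ^ m)) 2, ← zpow_mul, mul_comm, zpow_mul]
    norm_num
  have hμexp : Complex.exp ((m : ℂ) * (Real.pi : ℝ) * Complex.I) = μ := by
    rw [hμ, mul_assoc, Complex.exp_int_mul, Complex.exp_pi_mul_I]
  have hvμ : vz = β * μ := by
    rw [hv, Complex.exp_add, hβ, hμexp]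
  have hμne : μ ≠ 0 := by
    rw [hμ]
    exact zpow_ne_zero _ (by norm_num)
  have hβne : β ≠ 0 := Complex.exp_ne_zero _
  have hμinv : μ⁻¹ = μ := by
    have h2 : μ * μ = 1 := by rw [← sq]; exact hμsq
    exact (eq_inv_of_mul_eq_one_left h2).symm
  have hsum : vz + vz⁻¹ = μ * (β + β⁻¹) := by
    rw [hvμ, mul_inv, hμinv]
    ring
  rw [hsum, hβsum]
  rw [div_pow, mul_pow, hμsq, one_mul]
  push_cast
  rw [show ((2:ℂ) * Real.sqrt (n:ℝ)) ^ 2 = 4 * ((Real.sqrt (n:ℝ) : ℂ) * (Real.sqrt (n:ℝ) : ℂ)) by ring]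
  rw [show ((Real.sqrt (n:ℝ) : ℂ) * (Real.sqrt (n:ℝ) : ℂ)) = ((n:ℝ) : ℂ) by exact_mod_cast congrArg Complex.ofReal hsqn]
  push_cast
  ring

/-- Little Picard for entire functions omitting 0 and 1. -/
theorem picard01 {f : ℂ → ℂ} (hf : Differentiable ℂ f) (h0 : ∀ z, f z ≠ 0)
    (h1 : ∀ z, f z ≠ 1) (z z' : ℂ) : f z = f z' := by
  obtain ⟨g₀, hg₀d, hg₀⟩ := entire_exists_log hf h0
  have h2πI : (2 * (Real.pi : ℂ) * Complex.I) ≠ 0 := by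
    simp [Real.pi_ne_zero, Complex.I_ne_zero]
  set u : ℂ → ℂ := fun z => g₀ z / (2 * (Real.pi : ℂ) * Complex.I) with hu
  have hud : Differentiable ℂ u := hg₀d.div_const _
  have hg₀u : ∀ w, g₀ w = u w * (2 * (Real.pi : ℂ) * Complex.I) := by
    intro w
    rw [hu]
    field_simp
  have hu_nat : ∀ w (k : ℕ), u w ≠ (k : ℂ) := by
    intro w k hk
    have : g₀ w = (k : ℤ) * (2 * (Real.pi : ℂ) * Complex.I) := by
      rw [hg₀u w, hk]
      push_cast
      ring
    have hf1 : f w = 1 := by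
      rw [← hg₀ w, this, Complex.exp_int_mul_two_pi_mul_I]
    exact h1 w hf1
  have hu0 : ∀ w, u w ≠ 0 := fun w h => hu_nat w 0 (by simpa using h)
  have hu1 : ∀ w, u w - 1 ≠ 0 := fun w h =>
    hu_nat w 1 (by simpa using sub_eq_zero.mp h)
  obtain ⟨Lu, hLud, hLu⟩ := entire_exists_log hud hu0
  obtain ⟨Lt, hLtd, hLt⟩ := entire_exists_log (hud.sub_const 1) hu1
  set s : ℂ → ℂ := fun w => Complex.exp (Lu w / 2) with hs
  set t : ℂ → ℂ := fun w => Complex.exp (Lt w / 2) with ht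
  have hsd : Differentiable ℂ s := (hLud.div_const 2).cexp
  have htd : Differentiable ℂ t := (hLtd.div_const 2).cexp
  have hs2 : ∀ w, s w ^ 2 = u w := by
    intro w
    rw [hs]
    simp only [sq, ← Complex.exp_add]
    rw [show Lu w / 2 + Lu w / 2 = Lu w by ring]
    exact hLu w
  have ht2 : ∀ w, t w ^ 2 = u w - 1 := by
    intro w
    rw [ht]
    simp only [sq, ← Complex.exp_add]
    rw [show Lt w / 2 + Lt w / 2 = Lt w by ring]
    exact hLt w
  set v : ℂ → ℂ := fun w => s w - t w with hv
  have hvd : Differentiable ℂ v := hsd.sub htd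
  have hvmul : ∀ w, v w * (s w + t w) = 1 := by
    intro w
    rw [hv]
    simp only
    linear_combination (hs2 w) - (ht2 w)
  have hv0 : ∀ w, v w ≠ 0 := fun w => left_ne_zero_of_mul_eq_one (hvmul w)
  have hvinv : ∀ w, (v w)⁻¹ = s w + t w := by
    intro w
    exact (eq_inv_of_mul_eq_one_left (by rw [mul_comm]; exact hvmul w)).symm
  have hsv : ∀ w, s w = (v w + (v w)⁻¹) / 2 := by
    intro w
    rw [hvinv w, hv]
    simp only
    ring
  obtain ⟨W, hWd, hW⟩ := entire_exists_log hvd hv0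
  -- W omits the grid
  have hgrid : ∀ w q, InGrid q → W w ≠ q := by
    rintro w q ⟨n, m, ε, hn, hε, rfl⟩ hWq
    have hvw : v w = Complex.exp ((ε : ℂ) *
        (Real.log (Real.sqrt n + Real.sqrt ((n : ℝ) - 1)) : ℝ) +
        (m : ℂ) * (Real.pi : ℝ) * Complex.I) := by
      rw [← hW w, hWq]
    have := grid_val hn hε hvw
    rw [← hsv w, hs2 w] at this
    exact hu_nat w n this
  -- W is constant
  have hWconst : ∀ w w', W w = W w' := by
    by_contra hcon
    push_neg at hcon
    obtain ⟨w₁, w₂, hww⟩ := hcon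
    have hyex : ∃ y, deriv W y ≠ 0 := by
      by_contra hall
      push_neg at hall
      exact hww (is_const_of_deriv_eq_zero hWd hall w₁ w₂)
    obtain ⟨y, hy⟩ := hyex
    obtain ⟨p, hp⟩ := bigDisks hWd hy 4
    obtain ⟨q, hq, hdq⟩ := grid_dense p
    have : q ∈ ball p 4 := by
      rw [mem_ball, dist_comm]
      exact hdq
    obtain ⟨w, hw⟩ := hp this
    exact hgrid w q hq hw
  -- transfer constancy back to f
  have hWz := hWconst z z'
  have hvz : v z = v z' := by rw [← hW z, ← hW z', hWz]
  have hsz : s z = s z' := by rw [hsv z, hsv z', hvz]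
  have huz : u z = u z' := by rw [← hs2 z, ← hs2 z', hsz]
  have hgz : g₀ z = g₀ z' := by rw [hg₀u z, hg₀u z', huz]
  rw [← hg₀ z, ← hg₀ z', hgz]

/-- Little Picard, general omitted values. -/
theorem picard_two {f : ℂ → ℂ} (hf : Differentiable ℂ f) {a b : ℂ} (hab : a ≠ b)
    (ha : ∀ z, f z ≠ a) (hb : ∀ z, f z ≠ b) (z z' : ℂ) : f z = f z' := by
  have hba : b - a ≠ 0 := sub_ne_zero.mpr (Ne.symm hab)
  set f₁ : ℂ → ℂ := fun w => (f w - a) / (b - a) with hf₁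
  have hf₁d : Differentiable ℂ f₁ := (hf.sub_const a).div_const _
  have h0 : ∀ w, f₁ w ≠ 0 := by
    intro w h
    rw [hf₁] at h
    simp only [div_eq_zero_iff] at h
    rcases h with h | h
    · exact ha w (sub_eq_zero.mp h)
    · exact hba h
  have h1 : ∀ w, f₁ w ≠ 1 := by
    intro w h
    rw [hf₁, div_eq_one_iff_eq hba] at h
    exact hb w (by linear_combination h)
  have hkey := picard01 hf₁d h0 h1 z z'
  rw [hf₁] at hkey
  simp only at hkey
  field_simp [hba] at hkey
  linear_combination hkey

theorem stmt3 (n : ℕ) (hn : 1 ≤ n) (F : (Fin n → ℂ) → ℂ)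
    (hF : Differentiable ℂ F)
    (h : ∃ a b : ℂ, a ≠ b ∧ a ∉ Set.range F ∧ b ∉ Set.range F) :
    ∃ c : ℂ, ∀ z, F z = c := by
  obtain ⟨a, b, hab, ha, hb⟩ := h
  have key : ∀ x y : Fin n → ℂ, F x = F y := by
    intro x y
    set L : ℂ → (Fin n → ℂ) := fun t => fun i => x i + t * (y i - x i) with hL
    have hLd : Differentiable ℂ L := by
      rw [hL]
      apply differentiable_pi.mpr
      intro i
      exact (differentiable_const _).add (differentiable_id.mul_const _)
    have hGd : Differentiable ℂ (F ∘ L) := hF.comp hLd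
    have hGa : ∀ t, (F ∘ L) t ≠ a := fun t hc => ha ⟨L t, hc⟩
    have hGb : ∀ t, (F ∘ L) t ≠ b := fun t hc => hb ⟨L t, hc⟩
    have := picard_two hGd hab hGa hGb 0 1
    have hL0 : L 0 = x := by funext i; simp [hL]
    have hL1 : L 1 = y := by funext i; simp [hL]
    simpa [Function.comp, hL0, hL1] using this
  exact ⟨F (fun _ => 0), fun z => key z _⟩
end

section
/- Let f : ℂ → ℂ be entire. If the range of f is contained in ℂ \ {0} and also the range of z ↦ f z - 1 is contained in ℂ \ {0}, then f' ≡ 0. -/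
set_option maxHeartbeats 1600000

open Complex Metric Set intervalIntegral MeasureTheory

lemma deriv_differentiable {u : ℂ → ℂ} (hu : Differentiable ℂ u) :
    Differentiable ℂ (deriv u) := by
  have := (hu.contDiff (n := ((⊤:ℕ∞) : WithTop ℕ∞))).iterate_deriv 1
  simpa using this.differentiable (by simp)

lemma exists_primitive (u : ℂ → ℂ) (hu : Differentiable ℂ u) :
    ∃ F : ℂ → ℂ, ∀ z, HasDerivAt F (u z) z := by
  have hu' : Differentiable ℂ (deriv u) := deriv_differentiable hu
  refine ⟨fun x => ∫ t in (0:ℝ)..1, x * u ((t:ℂ) * x), fun x₀ => ?_⟩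
  set F' : ℂ → ℝ → ℂ := fun x t => u ((t:ℂ) * x) + x * ((t:ℂ) * deriv u ((t:ℂ) * x)) with hF'
  -- bounds
  obtain ⟨C₁, hC₁⟩ := (isCompact_closedBall (0:ℂ) (‖x₀‖+1)).exists_bound_of_continuousOn
    hu.continuous.continuousOn
  obtain ⟨C₂, hC₂⟩ := (isCompact_closedBall (0:ℂ) (‖x₀‖+1)).exists_bound_of_continuousOn
    hu'.continuous.continuousOn
  have hC₂0 : 0 ≤ C₂ := le_trans (norm_nonneg _) (hC₂ 0 (by simp; positivity))
  have hmem : ∀ t : ℝ, t ∈ Set.Ioc (0:ℝ) 1 → ∀ x ∈ ball x₀ 1, ((t:ℂ) * x) ∈ closedBall (0:ℂ) (‖x₀‖+1) := by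
    intro t ht x hx
    have hx' : ‖x‖ ≤ ‖x₀‖ + 1 := by
      have := mem_ball_iff_norm.1 hx
      calc ‖x‖ = ‖x₀ + (x - x₀)‖ := by ring_nf
      _ ≤ ‖x₀‖ + ‖x - x₀‖ := norm_add_le _ _
      _ ≤ ‖x₀‖ + 1 := by linarith
    simp only [mem_closedBall, dist_zero_right, norm_mul, Complex.norm_real]
    calc ‖t‖ * ‖x‖ ≤ 1 * (‖x₀‖+1) := by
          apply mul_le_mul _ hx' (norm_nonneg _) zero_le_one
          rw [Real.norm_eq_abs, abs_le]; constructor <;> linarith [ht.1, ht.2]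
    _ = ‖x₀‖ + 1 := one_mul _
  have key := intervalIntegral.hasDerivAt_integral_of_dominated_loc_of_deriv_le
    (𝕜 := ℂ) (μ := volume) (a := 0) (b := 1) (x₀ := x₀) (F := fun x t => x * u ((t:ℂ) * x))
    (F' := F') (bound := fun _ => C₁ + (‖x₀‖+1) * C₂) (s := ball x₀ 1) (ball_mem_nhds x₀ one_pos)
    (Filter.Eventually.of_forall (fun x => (Continuous.aestronglyMeasurable (by
        exact (continuous_const.mul (hu.continuous.comp (Continuous.mul continuous_ofReal continuous_const)))))))
    (Continuous.intervalIntegrable (by exact continuous_const.mul (hu.continuous.comp (Continuous.mul continuous_ofReal continuous_const))) _ _)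
    (Continuous.aestronglyMeasurable (by
        exact ((hu.continuous.comp (Continuous.mul continuous_ofReal continuous_const)).add
          (continuous_const.mul ((continuous_ofReal).mul (hu'.continuous.comp (Continuous.mul continuous_ofReal continuous_const)))))))
    (Filter.Eventually.of_forall (fun t ht x hx => ?_))
    (intervalIntegrable_const)
    (Filter.Eventually.of_forall (fun t _ x _ => ?_))
  · -- conclude : the integral of F' x₀ equals u x₀
    have h2 := key.2
    have hval : (∫ t in (0:ℝ)..1, F' x₀ t) = u x₀ := by
      have hFTC : ∀ t ∈ Set.uIcc (0:ℝ) 1, HasDerivAt (fun s : ℝ => (s:ℂ) * u ((s:ℂ) * x₀)) (F' x₀ t) t := by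
        intro t _
        have hU : HasDerivAt (fun s : ℂ => u (s * x₀)) (deriv u ((t:ℂ) * x₀) * x₀) (t:ℂ) := by
          have := ((hu ((t:ℂ) * x₀)).hasDerivAt).comp (t:ℂ) ((hasDerivAt_id (t:ℂ)).mul_const x₀)
          exact this.congr_deriv (by simp)
        have hU' : HasDerivAt (fun s : ℝ => u ((s:ℂ) * x₀)) (deriv u ((t:ℂ) * x₀) * x₀) t :=
          hU.comp_ofReal
        have hid : HasDerivAt (fun s : ℝ => ((s:ℝ):ℂ)) 1 t := by
          simpa using (hasDerivAt_id t).ofReal_comp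
        have hm2 := hid.mul hU'
        have heq : (1:ℂ) * u ((t:ℂ) * x₀) + (t:ℂ) * (deriv u ((t:ℂ)*x₀) * x₀) = F' x₀ t := by
          simp only [hF']; ring
        rw [← heq]; exact hm2
      rw [intervalIntegral.integral_eq_sub_of_hasDerivAt hFTC
        (Continuous.intervalIntegrable (by
          exact ((hu.continuous.comp (Continuous.mul continuous_ofReal continuous_const)).add
            (continuous_const.mul ((continuous_ofReal).mul (hu'.continuous.comp (Continuous.mul continuous_ofReal continuous_const))))) ) _ _)]
      simp
    rwa [hval] at h2
  · -- bound
    have hm := hmem t (by simpa [Set.uIoc_of_le (zero_le_one)] using ht) x hx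
    have h1 : ‖u ((t:ℂ) * x)‖ ≤ C₁ := hC₁ _ hm
    have h2 : ‖deriv u ((t:ℂ) * x)‖ ≤ C₂ := hC₂ _ hm
    have hxle : ‖x‖ ≤ ‖x₀‖ + 1 := by
      have := mem_ball_iff_norm.1 hx
      calc ‖x‖ = ‖x₀ + (x - x₀)‖ := by ring_nf
      _ ≤ ‖x₀‖ + ‖x - x₀‖ := norm_add_le _ _
      _ ≤ ‖x₀‖ + 1 := by linarith
    have htle : ‖(t:ℂ)‖ ≤ 1 := by
      have ht' : t ∈ Set.Ioc (0:ℝ) 1 := by simpa [Set.uIoc_of_le (zero_le_one)] using ht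
      simp only [Complex.norm_real, Real.norm_eq_abs, abs_le]
      constructor <;> linarith [ht'.1, ht'.2]
    show ‖F' x t‖ ≤ C₁ + (‖x₀‖ + 1) * C₂
    have hna : ‖F' x t‖ ≤ ‖u ((t:ℂ) * x)‖ + ‖x‖ * (‖(t:ℂ)‖ * ‖deriv u ((t:ℂ)*x)‖) := by
      have := norm_add_le (u ((t:ℂ) * x)) (x * ((t:ℂ) * deriv u ((t:ℂ) * x)))
      simpa [hF', norm_mul] using this
    have hprod : ‖x‖ * (‖(t:ℂ)‖ * ‖deriv u ((t:ℂ)*x)‖) ≤ (‖x₀‖+1) * C₂ := by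
      calc ‖x‖ * (‖(t:ℂ)‖ * ‖deriv u ((t:ℂ)*x)‖) ≤ (‖x₀‖+1) * (1 * C₂) := by
            apply mul_le_mul hxle _ (by positivity) (by positivity)
            exact mul_le_mul htle h2 (norm_nonneg _) zero_le_one
      _ = (‖x₀‖+1) * C₂ := by ring
    linarith
  · -- differentiability in x
    have h1 : HasDerivAt (fun x : ℂ => u ((t:ℂ) * x)) (deriv u ((t:ℂ) * x) * (t:ℂ)) x := by
      have := ((hu ((t:ℂ) * x)).hasDerivAt).comp x ((hasDerivAt_id x).const_mul (t:ℂ))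
      exact this.congr_deriv (by simp)
    have h2 := (hasDerivAt_id x).mul h1
    have heq : (1 : ℂ) * u ((t:ℂ)*x) + id x * (deriv u ((t:ℂ)*x) * (t:ℂ)) = F' x t := by
      simp only [hF', id]; ring
    have h3 : HasDerivAt (fun y : ℂ => y * u ((t:ℂ) * y)) (F' x t) x := by
      rw [← heq]; exact h2
    exact h3

lemma exists_exp_eq (g : ℂ → ℂ) (hg : Differentiable ℂ g) (h0 : ∀ z, g z ≠ 0) :
    ∃ h : ℂ → ℂ, Differentiable ℂ h ∧ ∀ z, g z = Complex.exp (h z) := by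
  have hg' : Differentiable ℂ (deriv g) := by
    have := (hg.contDiff (n := ((⊤:ℕ∞) : WithTop ℕ∞))).iterate_deriv 1
    simpa using this.differentiable (by simp)
  obtain ⟨F, hF⟩ := exists_primitive (fun z => deriv g z / g z) (hg'.div hg h0)
  have hFd : Differentiable ℂ F := fun z => (hF z).differentiableAt
  -- G = g * exp (-F) is constant
  set G : ℂ → ℂ := fun z => g z * Complex.exp (-F z) with hGdef
  have hGconst : ∀ z, G z = G 0 := by
    intro z
    have hd : ∀ w, HasDerivAt G 0 w := by
      intro w
      have h1 : HasDerivAt (fun z => Complex.exp (-F z)) (Complex.exp (-F w) * (-(deriv g w / g w))) w := by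
        have := ((hF w).neg).cexp
        simpa using this
      have h2 := (hg w).hasDerivAt.mul h1
      have : deriv g w * Complex.exp (-F w) + g w * (Complex.exp (-F w) * -(deriv g w / g w)) = 0 := by
        field_simp [h0 w]
        ring
      rwa [this] at h2
    have : ∀ x, fderiv ℂ G x = 0 := by
      intro x
      have := (hd x).hasFDerivAt.fderiv
      rw [this]
      exact ContinuousLinearMap.ext fun y => by simp
    exact is_const_of_fderiv_eq_zero (fun x => (hd x).differentiableAt) this z 0
  refine ⟨fun z => F z + Complex.log (G 0), hFd.add_const _, fun z => ?_⟩
  have hG0 : G 0 ≠ 0 := mul_ne_zero (h0 0) (Complex.exp_ne_zero _)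
  have := hGconst z
  rw [hGdef] at this
  simp only at this
  rw [Complex.exp_add, Complex.exp_log hG0]
  have hexp : Complex.exp (-F z) ≠ 0 := Complex.exp_ne_zero _
  show g z = Complex.exp (F z) * G 0
  rw [hGdef]
  simp only []
  rw [Complex.exp_neg]
  field_simp
  rw [Complex.exp_neg, Complex.exp_neg] at this
  field_simp at this
  linear_combination this

lemma bloch (h : ℂ → ℂ) (hd : Differentiable ℂ h) (hm0 : deriv h 0 ≠ 0) :
    ∃ c : ℂ, closedBall c (‖deriv h 0‖ / 64) ⊆ Set.range h := by
  have hd' : Differentiable ℂ (deriv h) := by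
    have := (hd.contDiff (n := ((⊤:ℕ∞) : WithTop ℕ∞))).iterate_deriv 1
    simpa using this.differentiable (by simp)
  set m : ℝ := ‖deriv h 0‖ with hm
  have hmpos : 0 < m := norm_pos_iff.2 hm0
  -- maximize φ
  set φ : ℂ → ℝ := fun z => (1 - ‖z‖) * ‖deriv h z‖ with hφ
  have hφc : ContinuousOn φ (closedBall 0 1) :=
    ((continuous_const.sub continuous_norm).mul hd'.continuous.norm).continuousOn
  obtain ⟨p, hp, hpmax'⟩ := (isCompact_closedBall (0:ℂ) 1).exists_isMaxOn
    ⟨0, by simp⟩ hφc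
  have hpmax : ∀ z ∈ closedBall (0:ℂ) 1, φ z ≤ φ p := fun z hz => hpmax' hz
  have hφ0 : φ 0 = m := by simp [hφ, hm]
  have hφp : m ≤ φ p := hφ0 ▸ hpmax 0 (by simp)
  set m' : ℝ := ‖deriv h p‖ with hm'
  set ρ : ℝ := (1 - ‖p‖)/2 with hρ
  have hφp' : φ p = 2 * ρ * m' := by rw [hφ]; simp only; rw [hρ, hm']; ring
  have hρpos : 0 < ρ := by
    rcases le_or_gt ρ 0 with hle | hlt
    · exfalso
      have : φ p ≤ 0 := by
        rw [hφp']
        have : 0 ≤ m' := norm_nonneg _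
        nlinarith
      linarith
    · exact hlt
  have hm'pos : 0 < m' := by nlinarith [hφp.trans_eq hφp']
  -- bound on deriv h on ball p ρ
  have hbound : ∀ z ∈ ball p ρ, ‖deriv h z‖ ≤ 2 * m' := by
    intro z hz
    have hzp : ‖z - p‖ < ρ := mem_ball_iff_norm.1 hz
    have hzn : ‖z‖ ≤ ‖p‖ + ρ := by
      calc ‖z‖ = ‖p + (z - p)‖ := by ring_nf
      _ ≤ ‖p‖ + ‖z - p‖ := norm_add_le _ _
      _ ≤ ‖p‖ + ρ := by linarith
    have hz1 : z ∈ closedBall (0:ℂ) 1 := by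
      simp only [mem_closedBall, dist_zero_right]
      have hp1 : ‖p‖ ≤ 1 := by simpa using hp
      rw [hρ] at hzn; linarith
    have h1 : φ z ≤ 2 * ρ * m' := hφp' ▸ hpmax z hz1
    have h2 : ρ ≤ 1 - ‖z‖ := by rw [hρ] at hzn ⊢; linarith
    have h3 : ρ * ‖deriv h z‖ ≤ φ z := by
      rw [hφ]; exact mul_le_mul_of_nonneg_right h2 (norm_nonneg _)
    have := h3.trans h1
    nlinarith
  -- Schwarz on deriv h
  have hmaps : MapsTo (deriv h) (ball p ρ) (ball (deriv h p) (4 * m')) := by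
    intro z hz
    simp only [mem_ball]
    calc dist (deriv h z) (deriv h p) ≤ ‖deriv h z‖ + ‖deriv h p‖ := dist_le_norm_add_norm _ _
    _ ≤ 2 * m' + m' := by have := hbound z hz; rw [← hm']; linarith
    _ < 4 * m' := by linarith
  have hschwarz : ∀ z ∈ ball p ρ, dist (deriv h z) (deriv h p) ≤ 4 * m' / ρ * dist z p :=
    fun z hz => Complex.dist_le_div_mul_dist_of_mapsTo_ball hd'.differentiableOn (hmaps.mono_right ball_subset_closedBall) hz
  set δ : ℝ := ρ / 16 with hδ
  have hδpos : 0 < δ := by positivity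
  have hδρ : δ < ρ := by rw [hδ]; linarith
  have hderiv_close : ∀ z ∈ closedBall p δ, ‖deriv h z - deriv h p‖ ≤ m' / 4 := by
    intro z hz
    have hz' : z ∈ ball p ρ := lt_of_le_of_lt (mem_closedBall.1 hz) hδρ
    have := hschwarz z hz'
    rw [dist_eq_norm] at this
    calc ‖deriv h z - deriv h p‖ ≤ 4 * m' / ρ * dist z p := this
    _ ≤ 4 * m' / ρ * δ := by
        apply mul_le_mul_of_nonneg_left (mem_closedBall.1 hz) (by positivity)
    _ = m' / 4 := by rw [hδ]; field_simp; ring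
  -- approximates linear on
  set a : ℂ := deriv h p with ha
  have ha0 : a ≠ 0 := by rw [ha]; exact norm_pos_iff.1 (hm' ▸ hm'pos)
  set e : ℂ ≃L[ℂ] ℂ := ContinuousLinearEquiv.unitsEquivAut ℂ (Units.mk0 a ha0) with he
  have happrox : ApproximatesLinearOn h (e : ℂ →L[ℂ] ℂ) (closedBall p δ)
      (Real.toNNReal (m' / 4)) := by
    intro x hx y hy
    set k : ℂ → ℂ := fun z => h z - z * a with hk
    have hkd : ∀ z, HasDerivAt k (deriv h z - a) z := by
      intro z
      have := ((hd z).hasDerivAt).sub ((hasDerivAt_id z).mul_const a)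
      exact this.congr_deriv (by simp)
    have hfd : ∀ z ∈ closedBall p δ, ‖fderiv ℂ k z‖ ≤ m' / 4 := by
      intro z hz
      rw [(hkd z).hasFDerivAt.fderiv]
      rw [ContinuousLinearMap.norm_toSpanSingleton]
      simpa [ha] using hderiv_close z hz
    have := Convex.norm_image_sub_le_of_norm_fderiv_le
      (fun z hz => ((hkd z).differentiableAt)) hfd (convex_closedBall p δ) hy hx
    have hcoe : (e : ℂ →L[ℂ] ℂ) (x - y) = (x - y) * a := by
      simp [he]
    rw [hcoe]
    calc ‖h x - h y - (x - y) * a‖ = ‖k x - k y‖ := by rw [hk]; ring_nf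
    _ ≤ m' / 4 * ‖x - y‖ := this
    _ = (Real.toNNReal (m' / 4)) * ‖x - y‖ := by
        rw [Real.coe_toNNReal _ (by positivity)]
  -- apply the surjectivity result
  have hsymm_norm : ‖(e.symm : ℂ →L[ℂ] ℂ)‖ = ‖a⁻¹‖ := by
    have : (e.symm : ℂ →L[ℂ] ℂ) = ContinuousLinearMap.smulRight (1 : ℂ →L[ℂ] ℂ) (a⁻¹) := by
      rfl
    rw [this, ContinuousLinearMap.norm_smulRight_apply, norm_one, one_mul]
  have hsurj := happrox.surjOn_closedBall_of_nonlinearRightInverse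
    e.toNonlinearRightInverse (le_of_lt hδpos) (subset_refl _)
  refine ⟨h p, fun w hw => ?_⟩
  have hnn : ((e.toNonlinearRightInverse.nnnorm : ℝ))⁻¹ = m' := by
    have h1 : (e.toNonlinearRightInverse.nnnorm : ℝ) = ‖(e.symm : ℂ →L[ℂ] ℂ)‖ := rfl
    rw [h1, hsymm_norm, norm_inv, hm']
    simp
  have hradius : m / 64 ≤ ((e.toNonlinearRightInverse.nnnorm : ℝ)⁻¹ - (Real.toNNReal (m'/4))) * δ := by
    rw [hnn, Real.coe_toNNReal _ (by positivity)]
    have h2ρm : m ≤ 2 * ρ * m' := hφp.trans_eq hφp'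
    have : (m' - m'/4) * δ = (3/64) * (ρ * m') := by rw [hδ]; ring
    rw [this]
    nlinarith
  have hw' : w ∈ closedBall (h p) (((e.toNonlinearRightInverse.nnnorm : ℝ)⁻¹ - (Real.toNNReal (m'/4))) * δ) :=
    closedBall_subset_closedBall hradius hw
  obtain ⟨z, _, hz⟩ := hsurj hw'
  exact ⟨z, hz⟩

lemma big_ball (h : ℂ → ℂ) (hd : Differentiable ℂ h) {z₀ : ℂ} (hz : deriv h z₀ ≠ 0) (R : ℝ) :
    ∃ c : ℂ, ball c R ⊆ Set.range h := by
  set m : ℝ := ‖deriv h z₀‖ with hm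
  have hmpos : 0 < m := norm_pos_iff.2 hz
  set R' : ℝ := max R 0 with hR'
  set s : ℝ := 64 * (R' + 1) / m with hs
  have hspos : 0 < s := by positivity
  set H : ℂ → ℂ := fun z => h (z₀ + (s:ℂ) * z) with hH
  have hHd : Differentiable ℂ H := hd.comp ((differentiable_id.const_mul _).const_add _)
  have hHder : HasDerivAt H (deriv h z₀ * (s:ℂ)) 0 := by
    have hinner : HasDerivAt (fun z : ℂ => z₀ + (s:ℂ) * z) ((s:ℂ)) 0 := by
      simpa using ((hasDerivAt_id (0:ℂ)).const_mul (s:ℂ)).const_add z₀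
    have houter : HasDerivAt h (deriv h (z₀ + (s:ℂ) * 0)) (z₀ + (s:ℂ) * 0) :=
      (hd _).hasDerivAt
    have := houter.comp 0 hinner
    exact this.congr_deriv (by simp)
  have hHder0 : deriv H 0 = deriv h z₀ * (s:ℂ) := hHder.deriv
  have hHne : deriv H 0 ≠ 0 := by
    rw [hHder0]
    exact mul_ne_zero hz (by exact_mod_cast ne_of_gt hspos)
  obtain ⟨c, hc⟩ := bloch H hHd hHne
  refine ⟨c, fun w hw => ?_⟩
  have hnorm : ‖deriv H 0‖ / 64 = R' + 1 := by
    rw [hHder0, norm_mul, Complex.norm_real, Real.norm_eq_abs, abs_of_pos hspos, hs, ← hm]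
    field_simp
  have hw' : w ∈ closedBall c (‖deriv H 0‖ / 64) := by
    rw [hnorm]
    have : dist w c < R := mem_ball.1 hw
    have hRR' : R ≤ R' := le_max_left _ _
    exact mem_closedBall.2 (by linarith)
  obtain ⟨z, hz'⟩ := hc hw'
  exact ⟨z₀ + (s:ℂ) * z, hz'⟩

lemma cosh_gap (x : ℝ) (hx : 0 ≤ x) :
    ∃ x' : ℝ, x ≤ x' ∧ x' ≤ x + 2 ∧ ∃ M : ℤ, Odd M ∧ Real.cosh x' = M := by
  set N : ℝ := Real.cosh x with hN
  have hN1 : 1 ≤ N := Real.one_le_cosh x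
  set j : ℤ := ⌈(N - 1)/2⌉ with hj
  set M : ℤ := 2 * j + 1 with hM
  have hMge : N ≤ (M:ℝ) := by
    have := Int.le_ceil ((N-1)/2)
    push_cast [hM]
    linarith
  have hMle : (M:ℝ) ≤ N + 2 := by
    have := Int.ceil_lt_add_one ((N-1)/2)
    push_cast [hM]
    linarith
  have hcosh2 : (3:ℝ) ≤ Real.cosh 2 := by
    rw [Real.cosh_eq]
    have h1 : Real.exp 1 > 2.7182818283 := Real.exp_one_gt_d9
    have h2 : Real.exp 2 = Real.exp 1 * Real.exp 1 := by rw [← Real.exp_add]; norm_num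
    have h3 : Real.exp (-2) > 0 := Real.exp_pos _
    nlinarith
  have hupper : N + 2 ≤ Real.cosh (x + 2) := by
    rw [Real.cosh_add]
    have h1 : 0 ≤ Real.sinh x := Real.sinh_nonneg_iff.2 hx
    have h2 : 0 ≤ Real.sinh 2 := Real.sinh_nonneg_iff.2 (by norm_num)
    have hNc : Real.cosh x = N := rfl
    nlinarith [mul_nonneg h1 h2, mul_nonneg (by linarith : (0:ℝ) ≤ N)
      (by linarith : (0:ℝ) ≤ Real.cosh 2 - 3)]
  have hMmem : (M:ℝ) ∈ Set.Icc (Real.cosh x) (Real.cosh (x+2)) := ⟨hMge, le_trans hMle hupper⟩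
  have := intermediate_value_Icc (by linarith : x ≤ x + 2) Real.continuous_cosh.continuousOn hMmem
  obtain ⟨x', hx'mem, hx'⟩ := this
  exact ⟨x', hx'mem.1, hx'mem.2, M, ⟨j, by rw [hM]⟩, hx'⟩

lemma grid_near (c : ℂ) : ∃ w : ℂ, dist w c ≤ 3 ∧ ∃ M : ℤ, Odd M ∧ Complex.cosh w = M := by
  set a : ℝ := c.re with hadef
  set b : ℝ := c.im with hbdef
  set k : ℤ := round (b / Real.pi) with hk
  obtain ⟨x', hx'1, hx'2, M, hModd, hMcosh⟩ := cosh_gap |a| (abs_nonneg a)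
  set xs : ℝ := if 0 ≤ a then x' else -x' with hxs
  have hxsa : |xs - a| ≤ 2 := by
    rw [hxs]
    rcases le_or_gt 0 a with hle | hlt
    · rw [if_pos hle, abs_sub_le_iff]
      rw [_root_.abs_of_nonneg hle] at hx'1 hx'2
      constructor <;> linarith
    · rw [if_neg (not_le.2 hlt), abs_sub_le_iff]
      rw [abs_of_neg hlt] at hx'1 hx'2
      constructor <;> linarith
  set w : ℂ := (xs:ℂ) + ((k * Real.pi : ℝ) : ℂ) * I with hw
  have hcoshxs : Real.cosh xs = M := by
    rw [hxs]
    rcases le_or_gt 0 a with hle | hlt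
    · rw [if_pos hle]; exact hMcosh
    · rw [if_neg (not_le.2 hlt), Real.cosh_neg]; exact hMcosh
  set M' : ℤ := if Even k then M else -M with hM'
  have hM'cast : ((M':ℤ):ℝ) = (-1)^k * M := by
    rw [hM']
    rcases Int.even_or_odd k with he | ho
    · rw [if_pos he, he.neg_one_zpow]; push_cast; ring
    · rw [if_neg (Int.not_even_iff_odd.2 ho), ho.neg_one_zpow]; push_cast; ring
  have hcoshw : Complex.cosh w = (M' : ℂ) := by
    have hsin : Complex.sin ((k * Real.pi : ℝ) : ℂ) = 0 := by
      rw [← Complex.ofReal_sin]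
      norm_cast
      exact Real.sin_int_mul_pi k
    have hcosR : Real.cos (k * Real.pi) = (-1)^k := by
      have := Real.cos_add_int_mul_pi 0 k
      simpa using this
    have hreal : Real.cosh xs * Real.cos (k * Real.pi) = (M' : ℝ) := by
      rw [hcoshxs, hcosR, hM'cast]; ring
    calc Complex.cosh w = Complex.cosh (xs:ℂ) * Complex.cos ((k * Real.pi : ℝ) : ℂ) := by
          rw [hw, Complex.cosh_add, Complex.cosh_mul_I, Complex.sinh_mul_I, hsin]
          ring
    _ = ((Real.cosh xs * Real.cos (k * Real.pi) : ℝ) : ℂ) := by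
          push_cast
          ring
    _ = ((M' : ℝ) : ℂ) := by rw [hreal]
    _ = (M' : ℂ) := by norm_cast
  have hM'odd : Odd M' := by
    rw [hM']
    rcases Int.even_or_odd k with he | ho
    · rw [if_pos he]; exact hModd
    · rw [if_neg (Int.not_even_iff_odd.2 ho)]; exact hModd.neg
  refine ⟨w, ?_, M', hM'odd, hcoshw⟩
  have hre : (w - c).re = xs - a := by simp [hw, hadef]
  have him : (w - c).im = k * Real.pi - b := by simp [hw, hbdef]
  have hpi : (0:ℝ) < Real.pi := Real.pi_pos
  have hpi4 : Real.pi < 4 := Real.pi_lt_four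
  have himb : |(w - c).im| ≤ Real.pi / 2 := by
    rw [him]
    have h2 : |(k:ℝ) - b / Real.pi| ≤ 1/2 := by
      simpa [abs_sub_comm] using abs_sub_round (b / Real.pi)
    have heq : (k:ℝ) * Real.pi - b = ((k:ℝ) - b / Real.pi) * Real.pi := by
      field_simp
    rw [heq, abs_mul, _root_.abs_of_pos hpi]
    nlinarith
  have hsq : ‖w - c‖^2 = (xs - a)^2 + ((k:ℝ) * Real.pi - b)^2 := by
    rw [Complex.sq_norm, Complex.normSq_apply, hre, him]
    ring
  rw [dist_eq_norm]
  have h1 : (xs - a)^2 ≤ 4 := by nlinarith [abs_nonneg (xs - a), abs_le.1 hxsa]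
  have h2 : ((k:ℝ) * Real.pi - b)^2 ≤ 4 := by
    have := abs_le.1 himb
    rw [him] at this
    nlinarith
  nlinarith [norm_nonneg (w - c), hsq]

theorem stmt11 (f : ℂ → ℂ) (hf : Differentiable ℂ f)
    (h0 : Set.range f ⊆ {0}ᶜ)
    (h1 : Set.range (fun z => f z - 1) ⊆ {0}ᶜ) :
    deriv f = 0 := by
  by_contra hne
  obtain ⟨z₀, hz₀⟩ : ∃ z₀, deriv f z₀ ≠ 0 := by
    by_contra hc; push_neg at hc
    exact hne (funext fun z => hc z)
  have h0' : ∀ z, f z ≠ 0 := fun z hz => h0 (mem_range_self z) hz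
  have h1' : ∀ z, f z ≠ 1 := fun z hz => h1 (mem_range_self z) (by simp [hz])
  have hπI : (2 * (Real.pi:ℂ) * I) ≠ 0 := by
    simp [Real.pi_ne_zero, Complex.I_ne_zero]
  -- f = exp g₀
  obtain ⟨g₀, hg₀d, hg₀⟩ := exists_exp_eq f hf h0'
  set g : ℂ → ℂ := fun z => g₀ z / (2 * (Real.pi:ℂ) * I) with hgdef
  have hgd : Differentiable ℂ g := hg₀d.div_const _
  have hg₀g : ∀ z, g₀ z = 2 * (Real.pi:ℂ) * I * g z := by
    intro z; rw [hgdef]; field_simp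
  have hgnotint : ∀ z (n : ℤ), g z ≠ n := by
    intro z n hzn
    apply h1' z
    rw [hg₀ z, hg₀g z, hzn]
    rw [Complex.exp_eq_one_iff]
    exact ⟨n, by ring⟩
  set u : ℂ → ℂ := fun z => 2 * g z - 1 with hudef
  have hud : Differentiable ℂ u := (hgd.const_mul 2).sub_const 1
  have hu_odd : ∀ z (M : ℤ), Odd M → u z ≠ M := by
    rintro z M ⟨n, hn⟩ hzM
    apply hgnotint z (n + 1)
    have h2 : (2:ℂ) * g z - 1 = ((2*n+1 : ℤ):ℂ) := by rw [← hn]; exact hzM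
    push_cast at h2 ⊢
    linear_combination h2 / 2
  -- u^2 - 1 nonvanishing
  have husq : ∀ z, u z ^ 2 - 1 ≠ 0 := by
    intro z hz
    have : (u z - 1) * (u z + 1) = 0 := by linear_combination hz
    rcases mul_eq_zero.1 this with h | h
    · exact hu_odd z 1 ⟨0, by norm_num⟩ (by push_cast; linear_combination h)
    · exact hu_odd z (-1) ⟨-1, by norm_num⟩ (by push_cast; linear_combination h)
  obtain ⟨w₁, hw₁d, hw₁⟩ := exists_exp_eq (fun z => u z ^ 2 - 1)
    (((hud.pow 2).sub_const 1)) husq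
  set v : ℂ → ℂ := fun z => Complex.exp (w₁ z / 2) with hvdef
  have hvd : Differentiable ℂ v := (hw₁d.div_const 2).cexp
  have hvsq : ∀ z, v z ^ 2 = u z ^ 2 - 1 := by
    intro z
    rw [hvdef]
    simp only
    rw [← Complex.exp_nat_mul]
    rw [hw₁ z]
    congr 1
    ring
  have huv : ∀ z, (u z + v z) * (u z - v z) = 1 := by
    intro z
    have := hvsq z
    ring_nf
    linear_combination -this
  have huvne : ∀ z, u z + v z ≠ 0 := by
    intro z hz
    have := huv z
    rw [hz, zero_mul] at this
    exact one_ne_zero this.symm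
  obtain ⟨h, hhd, hh⟩ := exists_exp_eq (fun z => u z + v z) (hud.add hvd) huvne
  have hcosh : ∀ z, Complex.cosh (h z) = u z := by
    intro z
    have hexp : Complex.exp (h z) = u z + v z := (hh z).symm
    have hmul : (u z - v z) * Complex.exp (h z) = 1 := by
      rw [hexp]; linear_combination huv z
    have hexpneg : Complex.exp (-h z) = u z - v z := by
      rw [Complex.exp_neg]
      exact (eq_inv_of_mul_eq_one_left hmul).symm
    rw [Complex.cosh, hexp, hexpneg]
    ring
  -- f in terms of h
  have hfeq : f = fun z => Complex.exp ((Real.pi:ℂ) * I * (Complex.cosh (h z) + 1)) := by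
    funext z
    rw [hg₀ z, hg₀g z, hcosh z, hudef]
    congr 1
    ring
  -- nonconstancy of h at z₀
  have hz : deriv h z₀ ≠ 0 := by
    intro hzero
    apply hz₀
    have hP : HasDerivAt (fun z => (Real.pi:ℂ) * I * (Complex.cosh (h z) + 1))
        ((Real.pi:ℂ) * I * (Complex.sinh (h z₀) * deriv h z₀)) z₀ := by
      have h1' : HasDerivAt (fun z => Complex.cosh (h z)) (Complex.sinh (h z₀) * deriv h z₀) z₀ :=
        (hhd z₀).hasDerivAt.ccosh
      exact ((h1'.add_const 1).const_mul _)
    have hD : HasDerivAt f (Complex.exp ((Real.pi:ℂ) * I * (Complex.cosh (h z₀) + 1)) *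
        ((Real.pi:ℂ) * I * (Complex.sinh (h z₀) * deriv h z₀))) z₀ := by
      rw [hfeq]
      exact hP.cexp
    rw [hD.deriv, hzero]
    ring
  -- contradiction via big ball and grid
  obtain ⟨c, hc⟩ := big_ball h hhd hz 4
  obtain ⟨w, hw3, M, hModd, hwM⟩ := grid_near c
  have hwball : w ∈ ball c 4 := mem_ball.2 (lt_of_le_of_lt hw3 (by norm_num))
  obtain ⟨z, hzw⟩ := hc hwball
  exact hu_odd z M hModd (by rw [← hcosh z, hzw, hwM])
end
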